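/- Let (M,g) be a smooth compact Riemannian manifold without boundary with V(M)=1, and suppose the kernel B_L satisfies |B_L(x,y)| ≤ C_N L^{d/2}/(1+√L·d(x,y))^N for some N > d+1 and all x,y. If f ∈ L²(M) is orthogonal to all Laplace eigenfunctions with eigenvalue < L, then W₁(f⁺, f⁻) ≤ C·L^{−1/2}·‖f‖_{L¹(M)}, where C depends only on (M,g), N, and C_N. -/

import Mathlib

open MeasureTheory

/-- The 1-Wasserstein (Vaserstein) distance, via Kantorovich–Rubinstein duality. -/
noncomputable def W1 {α : Type*} [MeasurableSpace α] [PseudoMetricSpace α]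
    (μ ν : Measure α) : ℝ :=
  sSup { c : ℝ | ∃ h : α → ℝ, LipschitzWith 1 h ∧ c = |(∫ x, h x ∂μ) - ∫ x, h x ∂ν| }

/-- Transport of high-frequency combinations of eigenfunctions (abstract form of the
theorem for a compact Riemannian manifold, with the Laplace eigenbasis encoded by the
functions `φ_i`, eigenvalues `λ_i`, and the Bochner–Riesz type kernel
`B_L(x,y) = ∑_{λ_i < L} a(λ_i/L) φ_i(x) φ_i(y)` satisfying the Sogge bound
`|B_L(x,y)| ≤ C_N L^{d/2}/(1+√L d(x,y))^N` for some `N > d+1`): there is a constant `C`,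
depending only on `(M, V, d, A, N, C_N)`, such that whenever `f` is integrable with zero
mean and orthogonal to all eigenfunctions with eigenvalue `< L`, `L ≥ 1`, then
`W₁(f⁺, f⁻) ≤ C·L^{-1/2}·‖f‖_{L¹(M)}`. -/
lemma pow_alg (d : ℕ) (N : ℝ) (k : ℕ) :
    (2:ℝ)^(k+1) * (2:ℝ)^((k+1)*d) / (2:ℝ)^((k:ℝ)*N)
      = (2:ℝ)^N * ((2:ℝ)^(-(N-1-(d:ℝ))))^(k+1) := by
  rw [← Real.rpow_natCast 2 (k+1), ← Real.rpow_natCast 2 ((k+1)*d),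
    ← Real.rpow_natCast ((2:ℝ) ^ (-(N-1-(d:ℝ)))) (k+1),
    ← Real.rpow_mul (by norm_num : (0:ℝ) ≤ 2),
    ← Real.rpow_add (by norm_num : (0:ℝ) < 2),
    ← Real.rpow_sub (by norm_num : (0:ℝ) < 2),
    ← Real.rpow_add (by norm_num : (0:ℝ) < 2)]
  congr 1
  push_cast
  ring

lemma annuli_est {M : Type*} [MetricSpace M] [CompactSpace M] [MeasurableSpace M] [BorelSpace M]
    (d : ℕ) (V : Measure M) [IsFiniteMeasure V]
    (A : ℝ) (hA : 0 < A)
    (hball : ∀ (x : M) (s : ℝ), 0 < s → (V (Metric.ball x s)).toReal ≤ A * s ^ d)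
    (N C_N : ℝ) (hN : (d : ℝ) + 1 < N) (hC_N : 0 < C_N)
    (L : ℝ) (hL : 1 ≤ L) (x : M) :
    Integrable (fun y => dist x y * (C_N * L ^ ((d:ℝ)/2) / (1 + Real.sqrt L * dist x y) ^ N)) V ∧
    ∫ y, dist x y * (C_N * L ^ ((d:ℝ)/2) / (1 + Real.sqrt L * dist x y) ^ N) ∂V
      ≤ (C_N * A * 2 ^ N / (1 - 2 ^ (-(N - 1 - (d:ℝ))))) * L ^ (-(1:ℝ)/2) := by
  have hL0 : (0:ℝ) ≤ L := by linarith
  set s : ℝ := Real.sqrt L with hs_def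
  have hs1 : 1 ≤ s := by
    rw [hs_def, show (1:ℝ) = Real.sqrt 1 by simp]
    exact Real.sqrt_le_sqrt hL
  have hs0 : 0 < s := by linarith
  have hN0 : 0 ≤ N := by
    have : (0:ℝ) ≤ (d:ℝ) := Nat.cast_nonneg d
    linarith
  have hLd : L ^ ((d:ℝ)/2) = s ^ d := by
    rw [hs_def, Real.sqrt_eq_rpow, ← Real.rpow_natCast (L ^ ((1:ℝ)/2)) d,
      ← Real.rpow_mul hL0]
    congr 1
    ring
  have hLinv : L ^ (-(1:ℝ)/2) = s⁻¹ := by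
    rw [hs_def, Real.sqrt_eq_rpow, show -(1:ℝ)/2 = -((1:ℝ)/2) by ring,
      Real.rpow_neg hL0]
  set q : ℝ := (2:ℝ) ^ (-(N - 1 - (d:ℝ))) with hq_def
  have hq0 : 0 ≤ q := le_of_lt (Real.rpow_pos_of_pos two_pos _)
  have hq1 : q < 1 := Real.rpow_lt_one_of_one_lt_of_neg one_lt_two (by linarith)
  -- the integrand
  set F : M → ℝ := fun y => dist x y * (C_N * L ^ ((d:ℝ)/2) / (1 + s * dist x y) ^ N) with hF_def
  have hbase : ∀ y : M, (1:ℝ) ≤ 1 + s * dist x y := fun y => by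
    nlinarith [dist_nonneg (x := x) (y := y)]
  have hden_pos : ∀ y : M, (0:ℝ) < (1 + s * dist x y) ^ N := fun y =>
    Real.rpow_pos_of_pos (by nlinarith [hbase y]) _
  have hden_one : ∀ y : M, (1:ℝ) ≤ (1 + s * dist x y) ^ N := fun y =>
    Real.one_le_rpow (hbase y) hN0
  have hF_nonneg : ∀ y, 0 ≤ F y := fun y => by
    have := hden_pos y
    have h1 : 0 ≤ C_N * L ^ ((d:ℝ)/2) / (1 + s * dist x y) ^ N := by positivity
    exact mul_nonneg dist_nonneg h1
  have hFcont : Continuous F := by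
    have hb : Continuous fun y : M => 1 + s * dist x y :=
      continuous_const.add (continuous_const.mul (Continuous.dist continuous_const continuous_id))
    have hbn : Continuous fun y : M => (1 + s * dist x y) ^ N :=
      hb.rpow_const (fun y => Or.inl (by nlinarith [hbase y]))
    have : Continuous fun y : M => C_N * L ^ ((d:ℝ)/2) / (1 + s * dist x y) ^ N :=
      continuous_const.div hbn (fun y => ne_of_gt (hden_pos y))
    exact (continuous_const.dist continuous_id).mul this
  have hFint : Integrable F V := by
    obtain ⟨CF, hCF⟩ := isCompact_univ.exists_bound_of_continuousOn hFcont.continuousOn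
    exact ⟨hFcont.aestronglyMeasurable,
      HasFiniteIntegral.of_bounded (C := CF) (ae_of_all _ fun y => hCF y trivial)⟩
  refine ⟨hFint, ?_⟩
  -- annuli
  set Ann : ℕ → Set M := fun k =>
    match k with
    | 0 => Metric.ball x (1/s)
    | (k+1) => Metric.ball x (2^(k+1)/s) \ Metric.ball x (2^k/s) with hAnn_def
  have hsub : ∀ k, Ann k ⊆ Metric.ball x (2^k / s) := by
    intro k
    match k with
    | 0 => simp [hAnn_def]
    | (k+1) => exact Set.diff_subset
  have hmeas : ∀ k, MeasurableSet (Ann k) := by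
    intro k
    match k with
    | 0 => exact measurableSet_ball
    | (k+1) => exact measurableSet_ball.diff measurableSet_ball
  have hdisj : Pairwise (Function.onFun Disjoint Ann) := by
    have key : ∀ j k, j < k → Disjoint (Ann j) (Ann k) := by
      intro j k hjk
      match k, hjk with
      | (m+1), hjk =>
        have hj : Ann j ⊆ Metric.ball x (2^m / s) := by
          refine (hsub j).trans (Metric.ball_subset_ball ?_)
          gcongr
          · norm_num
          · omega
        exact (Set.disjoint_sdiff_right.mono_left hj)
    intro j k hjk
    rcases lt_or_gt_of_ne hjk with h | h
    · exact key j k h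
    · exact (key k j h).symm
  have hcover : (⋃ k, Ann k) = Set.univ := by
    have claim : ∀ k, Metric.ball x (2^k / s) ⊆ ⋃ k, Ann k := by
      intro k
      induction k with
      | zero =>
        have : Metric.ball x ((2:ℝ)^0 / s) = Ann 0 := by norm_num [hAnn_def]
        rw [this]; exact Set.subset_iUnion Ann 0
      | succ k ih =>
        intro y hy
        by_cases hmem : y ∈ Metric.ball x (2^k / s)
        · exact ih hmem
        · exact Set.mem_iUnion.2 ⟨k+1, hy, hmem⟩
    ext y
    simp only [Set.mem_univ, iff_true]
    obtain ⟨k, hk⟩ := pow_unbounded_of_one_lt (s * dist y x) (one_lt_two (α := ℝ))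
    refine claim k ?_
    rw [Metric.mem_ball, lt_div_iff₀ hs0, mul_comm]
    exact hk
  have hasSum : HasSum (fun k => ∫ y in Ann k, F y ∂V) (∫ y, F y ∂V) := by
    have := MeasureTheory.hasSum_integral_iUnion hmeas hdisj
      (hcover ▸ (integrableOn_univ.2 hFint))
    rwa [hcover, setIntegral_univ] at this
  -- volume of annuli
  have hvol : ∀ k, (V (Ann k)).toReal ≤ A * ((2:ℝ)^k / s) ^ d := by
    intro k
    refine le_trans (ENNReal.toReal_mono (measure_ne_top V _) (measure_mono (hsub k))) ?_
    exact hball x _ (by positivity)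
  -- per-annulus bound
  have hbound : ∀ k, ∫ y in Ann k, F y ∂V ≤ C_N * A * 2^N * s⁻¹ * q ^ k := by
    intro k
    match k with
    | 0 =>
      have hpt : ∀ y ∈ Ann 0, ‖F y‖ ≤ (1/s) * (C_N * s ^ d) := by
        intro y hy
        have hd : dist x y < 1 / s := by
          have := hsub 0 hy
          rw [Metric.mem_ball] at this
          rw [dist_comm]
          simpa using this
        rw [Real.norm_eq_abs, abs_of_nonneg (hF_nonneg y)]
        have h2 : C_N * L ^ ((d:ℝ)/2) / (1 + s * dist x y) ^ N ≤ C_N * s ^ d := by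
          rw [hLd]
          calc C_N * s ^ d / (1 + s * dist x y) ^ N ≤ C_N * s ^ d / 1 := by
                gcongr
                exact hden_one y
            _ = C_N * s ^ d := by ring
        exact mul_le_mul (le_of_lt hd) h2 (by positivity) (by positivity)
      have h1 : ∫ y in Ann 0, F y ∂V ≤ ((1/s) * (C_N * s ^ d)) * (V (Ann 0)).toReal := by
        have := norm_setIntegral_le_of_norm_le_const (μ := V) (s := Ann 0)
          (measure_lt_top V _) hpt
        calc ∫ y in Ann 0, F y ∂V ≤ ‖∫ y in Ann 0, F y ∂V‖ := le_abs_self _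
          _ ≤ _ := this
      refine h1.trans ?_
      have h2 : ((1/s) * (C_N * s ^ d)) * (V (Ann 0)).toReal
          ≤ ((1/s) * (C_N * s ^ d)) * (A * ((2:ℝ)^0 / s) ^ d) := by
        gcongr
        exact hvol 0
      refine h2.trans ?_
      have heq : ((1/s) * (C_N * s ^ d)) * (A * ((2:ℝ)^0 / s) ^ d) = C_N * A * s⁻¹ := by
        field_simp
        rw [← mul_pow, mul_one_div_cancel hs0.ne', one_pow]
      rw [heq, pow_zero, mul_one]
      have h2N : (1:ℝ) ≤ 2 ^ N := Real.one_le_rpow one_le_two hN0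
      calc C_N * A * s⁻¹ = C_N * A * 1 * s⁻¹ := by ring
        _ ≤ C_N * A * 2^N * s⁻¹ := by gcongr
    | (k+1) =>
      have h2kN : (0:ℝ) < (2:ℝ) ^ ((k:ℝ) * N) := Real.rpow_pos_of_pos two_pos _
      have hpt : ∀ y ∈ Ann (k+1), ‖F y‖ ≤ ((2:ℝ)^(k+1)/s) * (C_N * s ^ d / (2:ℝ)^((k:ℝ)*N)) := by
        intro y hy
        have hd : dist x y < 2^(k+1) / s := by
          have := hsub (k+1) hy
          rw [Metric.mem_ball] at this
          rw [dist_comm]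
          simpa using this
        have hdl : (2:ℝ)^k / s ≤ dist x y := by
          have hy2 : y ∉ Metric.ball x (2^k / s) := hy.2
          rw [Metric.mem_ball, not_lt, dist_comm] at hy2
          exact hy2
        have hlow : (2:ℝ)^k ≤ 1 + s * dist x y := by
          have : (2:ℝ)^k ≤ s * dist x y := by
            rw [← div_le_iff₀' hs0]
            exact hdl
          linarith
        have hden : (2:ℝ)^((k:ℝ)*N) ≤ (1 + s * dist x y) ^ N := by
          rw [Real.rpow_mul (by norm_num : (0:ℝ) ≤ 2), Real.rpow_natCast]
          exact Real.rpow_le_rpow (by positivity) hlow hN0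
        rw [Real.norm_eq_abs, abs_of_nonneg (hF_nonneg y)]
        have h2 : C_N * L ^ ((d:ℝ)/2) / (1 + s * dist x y) ^ N
            ≤ C_N * s ^ d / (2:ℝ)^((k:ℝ)*N) := by
          rw [hLd]
          gcongr
        exact mul_le_mul (le_of_lt hd) h2 (by positivity) (by positivity)
      have h1 : ∫ y in Ann (k+1), F y ∂V
          ≤ (((2:ℝ)^(k+1)/s) * (C_N * s ^ d / (2:ℝ)^((k:ℝ)*N))) * (V (Ann (k+1))).toReal := by
        have := norm_setIntegral_le_of_norm_le_const (μ := V) (s := Ann (k+1))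
          (measure_lt_top V _) hpt
        calc ∫ y in Ann (k+1), F y ∂V ≤ ‖∫ y in Ann (k+1), F y ∂V‖ := le_abs_self _
          _ ≤ _ := this
      refine h1.trans ?_
      have h2 : (((2:ℝ)^(k+1)/s) * (C_N * s ^ d / (2:ℝ)^((k:ℝ)*N))) * (V (Ann (k+1))).toReal
          ≤ (((2:ℝ)^(k+1)/s) * (C_N * s ^ d / (2:ℝ)^((k:ℝ)*N))) * (A * ((2:ℝ)^(k+1) / s) ^ d) := by
        gcongr
        exact hvol (k+1)
      refine h2.trans (le_of_eq ?_)
      have hrd : ((2:ℝ)^(k+1) / s) ^ d = (2:ℝ)^((k+1)*d) / s ^ d := by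
        rw [div_pow, pow_mul]
      rw [hrd]
      have : (((2:ℝ)^(k+1)/s) * (C_N * s ^ d / (2:ℝ)^((k:ℝ)*N))) * (A * ((2:ℝ)^((k+1)*d) / s ^ d))
          = (C_N * A * s⁻¹) * ((2:ℝ)^(k+1) * (2:ℝ)^((k+1)*d) / (2:ℝ)^((k:ℝ)*N)) := by
        field_simp
      rw [this, pow_alg d N k]
      ring
  -- sum up
  have hsummand : Summable (fun k : ℕ => C_N * A * 2^N * s⁻¹ * q ^ k) :=
    (summable_geometric_of_lt_one hq0 hq1).mul_left _
  have := Summable.tsum_le_tsum hbound hasSum.summable hsummand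
  rw [hasSum.tsum_eq] at this
  refine this.trans ?_
  rw [tsum_mul_left, tsum_geometric_of_lt_one hq0 hq1, hLinv]
  rw [div_eq_mul_inv]
  exact le_of_eq (by ring)
open MeasureTheory

theorem wasserstein_high_frequency {M : Type*} [MetricSpace M] [CompactSpace M]
    [MeasurableSpace M] [BorelSpace M]
    (d : ℕ) (V : Measure M) [IsProbabilityMeasure V]
    (A : ℝ) (hA : 0 < A)
    (hball : ∀ (x : M) (s : ℝ), 0 < s → (V (Metric.ball x s)).toReal ≤ A * s ^ d)
    (N C_N : ℝ) (hN : (d : ℝ) + 1 < N) (hC_N : 0 < C_N) :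
    ∃ C : ℝ, 0 < C ∧
      ∀ (L : ℝ), 1 ≤ L →
      ∀ (φ : ℕ → M → ℝ) (lam : ℕ → ℝ) (a : ℝ → ℝ)
        (hfin : {i | lam i < L}.Finite)
        (f : M → ℝ), Integrable f V → (∫ x, f x ∂V) = 0 →
        (∀ i, Integrable (fun x => φ i x * f x) V) →
        (∀ i, lam i < L → ∫ x, φ i x * f x ∂V = 0) →
        ∀ B : M → M → ℝ,
        (B = fun x y => ∑ i ∈ hfin.toFinset, a (lam i / L) * φ i x * φ i y) →
        (∀ x, ∫ y, B x y ∂V = 1) →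
        (∀ x y, |B x y| ≤ C_N * L ^ ((d : ℝ) / 2) / (1 + Real.sqrt L * dist x y) ^ N) →
        W1 (V.withDensity (fun x => ENNReal.ofReal (f x)))
           (V.withDensity (fun x => ENNReal.ofReal (- f x)))
          ≤ C * L ^ (-(1 : ℝ) / 2) * ∫ x, |f x| ∂V := by
  have hq1 : (2:ℝ) ^ (-(N - 1 - (d:ℝ))) < 1 :=
    Real.rpow_lt_one_of_one_lt_of_neg one_lt_two (by linarith)
  have hq0 : (0:ℝ) < 2 ^ (-(N - 1 - (d:ℝ))) := Real.rpow_pos_of_pos two_pos _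
  have h2N : (0:ℝ) < 2 ^ N := Real.rpow_pos_of_pos two_pos _
  refine ⟨C_N * A * 2 ^ N / (1 - 2 ^ (-(N - 1 - (d:ℝ)))), div_pos (by positivity) (by linarith), ?_⟩
  intro L hL φ lam a hfin f hf hf0 hφf horth B hBdef hBone hB
  have hL0 : (0:ℝ) < L := by linarith
  set K : ℝ := C_N * A * 2 ^ N / (1 - 2 ^ (-(N - 1 - (d:ℝ)))) * L ^ (-(1:ℝ)/2) with hK_def
  have hK0 : 0 ≤ K := by
    have h1 : (0:ℝ) < L ^ (-(1:ℝ)/2) := Real.rpow_pos_of_pos hL0 _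
    have hC : 0 < C_N * A * 2 ^ N / (1 - 2 ^ (-(N - 1 - (d:ℝ)))) :=
      div_pos (by positivity) (by linarith)
    exact le_of_lt (mul_pos hC h1)
  have hRHS0 : 0 ≤ K * ∫ x, |f x| ∂V :=
    mul_nonneg hK0 (integral_nonneg fun x => abs_nonneg _)
  show W1 _ _ ≤ K * ∫ x, |f x| ∂V
  unfold W1
  apply Real.sSup_le _ hRHS0
  rintro c ⟨h, hLip, rfl⟩
  -- boundedness of h
  have hcont : Continuous h := hLip.continuous
  obtain ⟨Ch, hCh⟩ := isCompact_univ.exists_bound_of_continuousOn hcont.continuousOn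
  have hCh' : ∀ y, |h y| ≤ Ch := fun y => by
    simpa [Real.norm_eq_abs] using hCh y trivial
  -- Step 1: the difference of integrals equals ∫ h f
  have habs_sup : ∀ (t : ℝ), |t ⊔ 0| ≤ |t| := by
    intro t
    rcases le_total t 0 with ht | ht
    · rw [sup_eq_right.2 ht]; simp
    · rw [sup_eq_left.2 ht]
  have hpint : Integrable (fun x => (f x ⊔ 0) * h x) V := by
    refine Integrable.mono' (hf.abs.mul_const Ch)
      ((hf.aestronglyMeasurable.sup aestronglyMeasurable_const).mul hcont.aestronglyMeasurable)
      (ae_of_all _ fun x => ?_)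
    rw [Real.norm_eq_abs, abs_mul]
    exact mul_le_mul (habs_sup _) (hCh' x) (abs_nonneg _) (abs_nonneg _)
  have hmint : Integrable (fun x => (-f x ⊔ 0) * h x) V := by
    refine Integrable.mono' (hf.abs.mul_const Ch)
      ((hf.neg.aestronglyMeasurable.sup aestronglyMeasurable_const).mul hcont.aestronglyMeasurable)
      (ae_of_all _ fun x => ?_)
    rw [Real.norm_eq_abs, abs_mul]
    refine mul_le_mul (le_trans (habs_sup _) (by rw [abs_neg])) (hCh' x) (abs_nonneg _) (abs_nonneg _)
  have h1 : ∫ x, h x ∂(V.withDensity fun x => ENNReal.ofReal (f x))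
      = ∫ x, (f x ⊔ 0) * h x ∂V := by
    have hm : AEMeasurable (fun x => Real.toNNReal (f x)) V :=
      measurable_real_toNNReal.comp_aemeasurable hf.aemeasurable
    rw [show (fun x => ENNReal.ofReal (f x))
        = (fun x => ((Real.toNNReal (f x) : NNReal) : ENNReal)) from rfl,
      integral_withDensity_eq_integral_smul₀ hm h]
    refine integral_congr_ae (ae_of_all _ fun x => ?_)
    simp only [NNReal.smul_def, Real.coe_toNNReal', smul_eq_mul]
  have h2 : ∫ x, h x ∂(V.withDensity fun x => ENNReal.ofReal (-f x))
      = ∫ x, (-f x ⊔ 0) * h x ∂V := by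
    have hm : AEMeasurable (fun x => Real.toNNReal (-f x)) V :=
      measurable_real_toNNReal.comp_aemeasurable hf.neg.aemeasurable
    rw [show (fun x => ENNReal.ofReal (-f x))
        = (fun x => ((Real.toNNReal (-f x) : NNReal) : ENNReal)) from rfl,
      integral_withDensity_eq_integral_smul₀ hm h]
    refine integral_congr_ae (ae_of_all _ fun x => ?_)
    simp only [NNReal.smul_def, Real.coe_toNNReal', smul_eq_mul]
  have hdiffint : (∫ x, h x ∂(V.withDensity fun x => ENNReal.ofReal (f x)))
      - ∫ x, h x ∂(V.withDensity fun x => ENNReal.ofReal (-f x)) = ∫ x, h x * f x ∂V := by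
    rw [h1, h2, ← integral_sub hpint hmint]
    refine integral_congr_ae (ae_of_all _ fun x => ?_)
    have : (f x ⊔ 0) - (-f x ⊔ 0) = f x := by
      rcases le_total 0 (f x) with hx | hx
      · rw [sup_eq_left.2 hx, sup_eq_right.2 (neg_nonpos.2 hx), sub_zero]
      · rw [sup_eq_right.2 hx, sup_eq_left.2 (neg_nonneg.2 hx)]
        ring
    calc (f x ⊔ 0) * h x - (-f x ⊔ 0) * h x = ((f x ⊔ 0) - (-f x ⊔ 0)) * h x := by ring
      _ = h x * f x := by rw [this]; ring
  rw [hdiffint]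
  -- Step 2: kernel manipulations
  have hBint : ∀ x, Integrable (fun y => B x y) V := by
    intro x
    by_contra hni
    have := hBone x
    rw [integral_undef hni] at this
    norm_num at this
  have hChbd : ∃ C', ∀ y, ‖h y‖ ≤ C' := ⟨Ch, fun y => by simpa [Real.norm_eq_abs] using hCh' y⟩
  have hBh_int : ∀ x, Integrable (fun y => h y * B x y) V := fun x =>
    (hBint x).bdd_mul hcont.aestronglyMeasurable (ae_of_all _ fun y => hCh y trivial)
  set g : M → ℝ := fun x => ∫ y, h y * B x y ∂V with hg_def
  -- Step 2a : |h x - g x| ≤ K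
  have hkey : ∀ x, |h x - g x| ≤ K := by
    intro x
    obtain ⟨hFint, hFest⟩ := annuli_est d V A hA hball N C_N hN hC_N L hL x
    have hdiff2 : h x - g x = ∫ y, (h x - h y) * B x y ∂V := by
      have e1 : (fun y => (h x - h y) * B x y)
          = fun y => h x * B x y - h y * B x y := by funext y; ring
      rw [hg_def]
      simp only []
      rw [e1, integral_sub ((hBint x).const_mul (h x)) (hBh_int x),
        integral_const_mul, hBone x, mul_one]
    rw [hdiff2, ← Real.norm_eq_abs]
    calc ‖∫ y, (h x - h y) * B x y ∂V‖
        ≤ ∫ y, dist x y * (C_N * L ^ ((d:ℝ)/2) / (1 + Real.sqrt L * dist x y) ^ N) ∂V := by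
          refine norm_integral_le_of_norm_le hFint (ae_of_all _ fun y => ?_)
          rw [Real.norm_eq_abs, abs_mul]
          refine mul_le_mul ?_ (hB x y) (abs_nonneg _) dist_nonneg
          have : dist (h x) (h y) ≤ dist x y := by
            simpa using hLip.dist_le_mul x y
          calc |h x - h y| = dist (h x) (h y) := (Real.dist_eq _ _).symm
            _ ≤ dist x y := this
      _ ≤ K := hFest
  -- Step 2b : g is a finite combination of the φ i
  classical
  set n : Finset ℕ := hfin.toFinset with hn_def
  have hmem : ∀ i ∈ n, lam i < L := fun i hi => (Set.Finite.mem_toFinset hfin).1 hi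
  set v : M → ({ i // i ∈ n } → ℝ) := fun x i => a (lam i.1 / L) * φ i.1 x with hv_def
  have hBsum : ∀ x y, B x y = ∑ i : { i // i ∈ n }, v x i * φ i.1 y := by
    intro x y
    rw [hBdef]
    rw [Finset.sum_coe_sort n (fun i => a (lam i / L) * φ i x * φ i y)]
  set S : Submodule ℝ ({ i // i ∈ n } → ℝ) :=
    { carrier := {w | Integrable (fun y => h y * ∑ i : { i // i ∈ n }, w i * φ i.1 y) V}
      add_mem' := by
        intro w w' hw hw'
        show Integrable (fun y => h y * ∑ i : { i // i ∈ n }, (w + w') i * φ i.1 y) V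
        have e : (fun y => h y * ∑ i : { i // i ∈ n }, (w + w') i * φ i.1 y)
            = fun y => (h y * ∑ i : { i // i ∈ n }, w i * φ i.1 y)
              + (h y * ∑ i : { i // i ∈ n }, w' i * φ i.1 y) := by
          funext y
          simp only [Pi.add_apply, add_mul, Finset.sum_add_distrib, mul_add]
        rw [e]
        exact hw.add hw'
      zero_mem' := by
        simp [Set.mem_setOf_eq]
      smul_mem' := by
        intro c w hw
        show Integrable (fun y => h y * ∑ i : { i // i ∈ n }, (c • w) i * φ i.1 y) V
        have e : (fun y => h y * ∑ i : { i // i ∈ n }, (c • w) i * φ i.1 y)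
            = fun y => c * (h y * ∑ i : { i // i ∈ n }, w i * φ i.1 y) := by
          funext y
          simp only [Pi.smul_apply, smul_eq_mul, mul_assoc]
          rw [← Finset.mul_sum]
          ring
        rw [e]
        exact hw.const_mul c
    } with hS_def
  have hSmem : ∀ w, w ∈ S ↔ Integrable (fun y => h y * ∑ i : { i // i ∈ n }, w i * φ i.1 y) V :=
    fun w => Iff.rfl
  have hvS : ∀ x, v x ∈ S := by
    intro x
    rw [hSmem]
    have e : (fun y => h y * ∑ i : { i // i ∈ n }, v x i * φ i.1 y)
        = fun y => h y * B x y := by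
      funext y
      rw [hBsum x y]
    rw [e]
    exact hBh_int x
  obtain ⟨S', hcompl⟩ := Submodule.exists_isCompl S
  set π := S.linearProjOfIsCompl S' hcompl with hπ_def
  set T : ({ i // i ∈ n } → ℝ) → ℝ :=
    fun w => ∫ y, h y * ∑ i : { i // i ∈ n }, (π w : { i // i ∈ n } → ℝ) i * φ i.1 y ∂V
    with hT_def
  have hTmem : ∀ w, Integrable
      (fun y => h y * ∑ i : { i // i ∈ n }, (π w : { i // i ∈ n } → ℝ) i * φ i.1 y) V :=
    fun w => (hSmem _).1 (π w).2
  have hTS : ∀ w, w ∈ S → T w = ∫ y, h y * ∑ i : { i // i ∈ n }, w i * φ i.1 y ∂V := by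
    intro w hw
    have hπ : π w = ⟨w, hw⟩ := Submodule.linearProjOfIsCompl_apply_left hcompl ⟨w, hw⟩
    simp only [hT_def, hπ]
  have hTadd : ∀ w w', T (w + w') = T w + T w' := by
    intro w w'
    have hm : π (w + w') = π w + π w' := map_add π w w'
    rw [hT_def]
    simp only [hm, Submodule.coe_add]
    have e : (fun y => h y * ∑ i : { i // i ∈ n },
          ((π w : { i // i ∈ n } → ℝ) + (π w' : { i // i ∈ n } → ℝ)) i * φ i.1 y)
        = fun y => (h y * ∑ i : { i // i ∈ n }, (π w : { i // i ∈ n } → ℝ) i * φ i.1 y)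
          + (h y * ∑ i : { i // i ∈ n }, (π w' : { i // i ∈ n } → ℝ) i * φ i.1 y) := by
      funext y
      simp only [Pi.add_apply, add_mul, Finset.sum_add_distrib, mul_add]
    rw [e, integral_add (hTmem w) (hTmem w')]
  have hTsmul : ∀ (c : ℝ) w, T (c • w) = c * T w := by
    intro c w
    have hm : π (c • w) = c • π w := map_smul π c w
    rw [hT_def]
    simp only [hm, Submodule.coe_smul]
    have e : (fun y => h y * ∑ i : { i // i ∈ n },
          (c • (π w : { i // i ∈ n } → ℝ)) i * φ i.1 y)
        = fun y => c * (h y * ∑ i : { i // i ∈ n }, (π w : { i // i ∈ n } → ℝ) i * φ i.1 y) := by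
      funext y
      simp only [Pi.smul_apply, smul_eq_mul, mul_assoc]
      rw [← Finset.mul_sum]
      ring
    rw [e, integral_const_mul]
  set Tl : ({ i // i ∈ n } → ℝ) →ₗ[ℝ] ℝ :=
    { toFun := T
      map_add' := hTadd
      map_smul' := hTsmul } with hTl_def
  have hTw : ∀ w, T w = ∑ i : { i // i ∈ n }, w i * T (fun j => if i = j then 1 else 0) := by
    intro w
    have := LinearMap.pi_apply_eq_sum_univ Tl w
    simpa [hTl_def, smul_eq_mul] using this
  have hgv : ∀ x, g x = ∑ i : { i // i ∈ n }, v x i * T (fun j => if i = j then 1 else 0) := by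
    intro x
    rw [← hTw (v x), hTS (v x) (hvS x), hg_def]
    simp only []
    congr 1
    funext y
    rw [hBsum x y]
  -- Step 3 : ∫ g f = 0
  set cc : { i // i ∈ n } → ℝ := fun i => T (fun j => if i = j then 1 else 0) with hcc_def
  have hgf_eq : (fun x => g x * f x)
      = fun x => ∑ i : { i // i ∈ n }, (a (lam i.1 / L) * cc i) * (φ i.1 x * f x) := by
    funext x
    rw [hgv x, Finset.sum_mul]
    apply Finset.sum_congr rfl
    intro i _
    rw [hv_def]
    ring
  have hgf_int : Integrable (fun x => g x * f x) V := by
    rw [hgf_eq]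
    exact integrable_finset_sum _ (fun i _ => (hφf i.1).const_mul _)
  have hgf0 : ∫ x, g x * f x ∂V = 0 := by
    rw [hgf_eq, integral_finset_sum _ (fun i _ => (hφf i.1).const_mul _)]
    refine Finset.sum_eq_zero fun i _ => ?_
    rw [integral_const_mul, horth i.1 (hmem i.1 i.2), mul_zero]
  -- Step 4 : conclusion
  have hhf_int : Integrable (fun x => h x * f x) V :=
    hf.bdd_mul hcont.aestronglyMeasurable (ae_of_all _ fun y => hCh y trivial)
  have hhg_int : Integrable (fun x => (h x - g x) * f x) V := by
    have e : (fun x => (h x - g x) * f x) = fun x => h x * f x - g x * f x := by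
      funext x; ring
    rw [e]
    exact hhf_int.sub hgf_int
  have hsplit : ∫ x, h x * f x ∂V = ∫ x, (h x - g x) * f x ∂V := by
    have e : (fun x => h x * f x) = fun x => (h x - g x) * f x + g x * f x := by
      funext x; ring
    rw [e, integral_add hhg_int hgf_int, hgf0, add_zero]
  rw [hsplit, ← Real.norm_eq_abs]
  calc ‖∫ x, (h x - g x) * f x ∂V‖ ≤ ∫ x, K * |f x| ∂V := by
        refine norm_integral_le_of_norm_le (hf.abs.const_mul K) (ae_of_all _ fun x => ?_)
        rw [Real.norm_eq_abs, abs_mul]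
        exact mul_le_mul_of_nonneg_right (hkey x) (abs_nonneg _)
    _ = K * ∫ x, |f x| ∂V := integral_const_mul K _
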